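/- Let $U, V$ be independent $\mathcal{N}(0, I_d)$ vectors and ${\bf B} \in \mathbb{R}^{d\times d}$ with largest singular value $D_{11}$ and $t > 0$ such that $D_{11}^2/t^2 \le 3/4$. Then $\exp(\|{\bf B}\|_F^2/(2t^2)) \le \mathbb{E}[\exp(U^\top {\bf B} V / t)] \le \exp(\|{\bf B}\|_F^2/t^2)$. -/

import Mathlib

open MeasureTheory ProbabilityTheory Real Matrix
open scoped ENNReal NNReal

noncomputable section AuxStmt10

/-! ### 1D Gaussian facts -/

lemma aux_integral_gauss (f : ℝ → ℝ) :
    ∫ x, f x ∂(gaussianReal 0 1) = ∫ x, gaussianPDFReal 0 1 x * f x := by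
  rw [gaussianReal_of_var_ne_zero 0 one_ne_zero]
  have hm : Measurable fun x => (gaussianPDFReal 0 1 x).toNNReal :=
    (measurable_gaussianPDFReal 0 1).real_toNNReal
  have hpdf : gaussianPDF 0 1 = fun x => ((gaussianPDFReal 0 1 x).toNNReal : ℝ≥0∞) := rfl
  rw [hpdf, integral_withDensity_eq_integral_smul hm]
  refine integral_congr_ae (ae_of_all _ fun x => ?_)
  simp [NNReal.smul_def, Real.coe_toNNReal _ (gaussianPDFReal_nonneg 0 1 x)]

lemma aux_integrable_gauss_iff (f : ℝ → ℝ) :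
    Integrable f (gaussianReal 0 1) ↔
      Integrable (fun x => gaussianPDFReal 0 1 x * f x) volume := by
  rw [gaussianReal_of_var_ne_zero 0 one_ne_zero]
  have hm : Measurable fun x => (gaussianPDFReal 0 1 x).toNNReal :=
    (measurable_gaussianPDFReal 0 1).real_toNNReal
  have hpdf : gaussianPDF 0 1 = fun x => ((gaussianPDFReal 0 1 x).toNNReal : ℝ≥0∞) := rfl
  rw [hpdf, integrable_withDensity_iff_integrable_smul hm]
  constructor <;> intro h <;> refine h.congr (ae_of_all _ fun x => ?_) <;>
    simp [NNReal.smul_def, Real.coe_toNNReal _ (gaussianPDFReal_nonneg 0 1 x)]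

lemma aux_pdf_lin (c x : ℝ) :
    gaussianPDFReal 0 1 x * rexp (c * x) = rexp (c ^ 2 / 2) * gaussianPDFReal c 1 x := by
  simp only [gaussianPDFReal, NNReal.coe_one, mul_one, sub_zero]
  rw [mul_assoc, ← Real.exp_add, mul_comm (rexp (c ^ 2 / 2)), mul_assoc, ← Real.exp_add]
  congr 1
  ring

lemma aux_int_lin (c : ℝ) :
    ∫ x, rexp (c * x) ∂(gaussianReal 0 1) = rexp (c ^ 2 / 2) := by
  rw [aux_integral_gauss]
  simp_rw [aux_pdf_lin]
  rw [integral_const_mul, integral_gaussianPDFReal_eq_one c one_ne_zero, mul_one]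

lemma aux_integrable_lin (c : ℝ) :
    Integrable (fun x => rexp (c * x)) (gaussianReal 0 1) := by
  rw [aux_integrable_gauss_iff]
  simp_rw [aux_pdf_lin]
  exact (integrable_gaussianPDFReal c 1).const_mul _

lemma aux_pdf_sq {s : ℝ} (hs : s < 1) (x : ℝ) :
    gaussianPDFReal 0 1 x * rexp (s * x ^ 2 / 2)
      = (Real.sqrt (1 - s))⁻¹ *
        gaussianPDFReal 0 (⟨(1 - s)⁻¹, inv_nonneg.2 (by linarith)⟩ : ℝ≥0) x := by
  have h1s : (0:ℝ) < 1 - s := by linarith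
  have hsq : Real.sqrt (2*π*(1-s)⁻¹) = Real.sqrt (2*π) * (Real.sqrt (1-s))⁻¹ := by
    rw [Real.sqrt_mul (by positivity), Real.sqrt_inv]
  have hexp : -x^2/(2*(1-s)⁻¹) = -x^2/2 + s*x^2/2 := by
    rw [← add_div, div_eq_div_iff (by positivity) (by norm_num)]
    field_simp
    ring
  simp only [gaussianPDFReal, NNReal.coe_one, NNReal.coe_mk, mul_one, sub_zero]
  change _ = _ * ((√(2 * π * (1 - s)⁻¹))⁻¹ * rexp (-x ^ 2 / (2 * (1 - s)⁻¹)))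
  rw [hsq, hexp, mul_assoc, ← Real.exp_add]
  have h2 : Real.sqrt (1-s) ≠ 0 := by positivity
  have h3 : Real.sqrt (2*π) ≠ 0 := by positivity
  field_simp

lemma aux_int_sq {s : ℝ} (hs : s < 1) :
    ∫ x, rexp (s * x ^ 2 / 2) ∂(gaussianReal 0 1) = (Real.sqrt (1 - s))⁻¹ := by
  rw [aux_integral_gauss]
  simp_rw [aux_pdf_sq hs]
  erw [integral_const_mul, integral_gaussianPDFReal_eq_one _ (by
    intro h
    have := congrArg (NNReal.toReal) h
    change (1 - s)⁻¹ = 0 at this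
    simp at this
    linarith), mul_one]

lemma aux_integrable_sq {s : ℝ} (hs : s < 1) :
    Integrable (fun x => rexp (s * x ^ 2 / 2)) (gaussianReal 0 1) := by
  rw [aux_integrable_gauss_iff]
  simp_rw [aux_pdf_sq hs]
  exact (integrable_gaussianPDFReal _ _).const_mul _

/-! ### products over pi measures -/

lemma aux_prod_integral {d : ℕ} (f : Fin d → ℝ → ℝ) :
    ∫ x : Fin d → ℝ, ∏ i, f i (x i) ∂(Measure.pi fun _ => gaussianReal 0 1)
      = ∏ i, ∫ x, f i x ∂(gaussianReal 0 1) := by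
  letI : MeasureSpace ℝ := ⟨gaussianReal 0 1⟩
  haveI : SigmaFinite (volume : Measure ℝ) := by
    change SigmaFinite (gaussianReal 0 1); infer_instance
  exact MeasureTheory.integral_fintype_prod_eq_prod (𝕜 := ℝ) f

lemma aux_prod_integrable {d : ℕ} (f : Fin d → ℝ → ℝ)
    (hf : ∀ i, Integrable (f i) (gaussianReal 0 1)) :
    Integrable (fun x : Fin d → ℝ => ∏ i, f i (x i))
      (Measure.pi fun _ => gaussianReal 0 1) := by
  letI : MeasureSpace ℝ := ⟨gaussianReal 0 1⟩
  haveI : SigmaFinite (volume : Measure ℝ) := by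
    change SigmaFinite (gaussianReal 0 1); infer_instance
  exact MeasureTheory.Integrable.fintype_prod (𝕜 := ℝ) hf

/-! ### scalar bound -/

lemma aux_sqrt_bound {s : ℝ} (h0 : 0 ≤ s) (h1 : s ≤ 3 / 4) :
    rexp (s / 2) ≤ (Real.sqrt (1 - s))⁻¹ ∧ (Real.sqrt (1 - s))⁻¹ ≤ rexp s := by
  have h1s : (0:ℝ) < 1 - s := by linarith
  have hsq : (0:ℝ) < Real.sqrt (1 - s) := Real.sqrt_pos.2 h1s
  constructor
  · have h3 : 1 - s ≤ rexp (-s) := by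
      have := Real.add_one_le_exp (-s)
      linarith
    have h2 : rexp (-(s/2)) ^ 2 = rexp (-s) := by
      rw [sq, ← Real.exp_add]
      ring_nf
    have hub : Real.sqrt (1 - s) ≤ rexp (-(s/2)) :=
      (Real.sqrt_le_sqrt h3).trans_eq (by rw [← h2, Real.sqrt_sq (Real.exp_nonneg _)])
    calc rexp (s/2) = (rexp (-(s/2)))⁻¹ := by rw [Real.exp_neg, inv_inv]
      _ ≤ (Real.sqrt (1 - s))⁻¹ := by
          apply inv_anti₀ hsq hub
  · have e : (0:ℝ) < rexp (2*s) := Real.exp_pos _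
    have hP : 1 + 2*s + (2*s)^2/2 + (2*s)^3/6 ≤ rexp (2*s) := by
      have := Real.sum_le_exp_of_nonneg (x := 2*s) (by linarith) 4
      simp [Finset.sum_range_succ, Nat.factorial] at this
      linarith
    have key : 1 ≤ (1-s) * rexp (2*s) := by nlinarith [sq_nonneg s, pow_nonneg h0 3, pow_nonneg h0 4]
    have hinv : (rexp (2*s))⁻¹ ≤ 1 - s := by
      rw [← one_div, div_le_iff₀ e]
      nlinarith
    have hlb : rexp (-s) ≤ Real.sqrt (1 - s) := by
      rw [show rexp (-s) = Real.sqrt (rexp (-s) ^ 2) from (Real.sqrt_sq (Real.exp_nonneg _)).symm]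
      apply Real.sqrt_le_sqrt
      rw [sq, ← Real.exp_add]
      calc rexp (-s + -s) = (rexp (2*s))⁻¹ := by rw [← Real.exp_neg]; ring_nf
        _ ≤ 1 - s := hinv
    calc (Real.sqrt (1 - s))⁻¹ ≤ (rexp (-s))⁻¹ := inv_anti₀ (Real.exp_pos _) hlb
      _ = rexp s := by rw [Real.exp_neg, inv_inv]

/-! ### the standard gaussian pi measure as a density -/

lemma aux_pi_withDensity (d : ℕ) :
    (Measure.pi fun _ : Fin d => gaussianReal 0 1)
      = volume.withDensity (fun x => ∏ i, gaussianPDF 0 1 (x i)) := by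
  refine Measure.pi_eq fun s hs => ?_
  rw [withDensity_apply _ (MeasurableSet.univ_pi hs)]
  have hind : ∀ x : Fin d → ℝ, (Set.univ.pi s).indicator
      (fun x => ∏ i, gaussianPDF 0 1 (x i)) x
      = ∏ i, ENNReal.ofReal (((s i).indicator (gaussianPDFReal 0 1)) (x i)) := by
    intro x
    by_cases hx : x ∈ Set.univ.pi s
    · rw [Set.indicator_of_mem hx]
      refine Finset.prod_congr rfl fun i _ => ?_
      rw [Set.indicator_of_mem (hx i (Set.mem_univ i))]
      rfl
    · rw [Set.indicator_of_notMem hx]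
      have hx' : ∃ i, x i ∉ s i := by simpa [Set.mem_pi] using hx
      obtain ⟨i, hi⟩ := hx' 
      refine (Finset.prod_eq_zero (Finset.mem_univ i) ?_).symm
      rw [Set.indicator_of_notMem hi]
      simp
  rw [← lintegral_indicator (MeasurableSet.univ_pi hs)]
  simp_rw [hind]
  have hF : ∀ i, Integrable ((s i).indicator (gaussianPDFReal 0 1)) volume :=
    fun i => (integrable_gaussianPDFReal 0 1).indicator (hs i)
  have hFnn : ∀ i (y : ℝ), 0 ≤ (s i).indicator (gaussianPDFReal 0 1) y :=
    fun i y => Set.indicator_nonneg (fun z _ => gaussianPDFReal_nonneg 0 1 z) y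
  have hInt : Integrable (fun x : Fin d → ℝ =>
      ∏ i, ((s i).indicator (gaussianPDFReal 0 1)) (x i)) volume :=
    Integrable.fintype_prod (𝕜 := ℝ) hF
  calc ∫⁻ x : Fin d → ℝ, ∏ i, ENNReal.ofReal (((s i).indicator (gaussianPDFReal 0 1)) (x i))
      = ∫⁻ x : Fin d → ℝ, ENNReal.ofReal (∏ i, ((s i).indicator (gaussianPDFReal 0 1)) (x i)) := by
        refine lintegral_congr fun x => ?_
        rw [ENNReal.ofReal_prod_of_nonneg fun i _ => hFnn i (x i)]
    _ = ENNReal.ofReal (∫ x : Fin d → ℝ, ∏ i, ((s i).indicator (gaussianPDFReal 0 1)) (x i)) :=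
        (ofReal_integral_eq_lintegral_ofReal hInt
          (ae_of_all _ fun x => Finset.prod_nonneg fun i _ => hFnn i (x i))).symm
    _ = ENNReal.ofReal (∏ i, ∫ y, ((s i).indicator (gaussianPDFReal 0 1)) y) := by
        exact congrArg ENNReal.ofReal (MeasureTheory.integral_fintype_prod_eq_prod (𝕜 := ℝ) _)
    _ = ∏ i, ENNReal.ofReal (∫ y, ((s i).indicator (gaussianPDFReal 0 1)) y) := by
        rw [ENNReal.ofReal_prod_of_nonneg fun i _ =>
          integral_nonneg (fun y => hFnn i y)]
    _ = ∏ i, gaussianReal 0 1 (s i) := by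
        refine Finset.prod_congr rfl fun i _ => ?_
        rw [MeasureTheory.integral_indicator (hs i),
          ← gaussianReal_apply_eq_integral 0 one_ne_zero (s i)]

lemma aux_map_withDensity {d : ℕ} {T : (Fin d → ℝ) → (Fin d → ℝ)} (hT : Measurable T)
    (g : (Fin d → ℝ) → ℝ≥0∞) (hg : Measurable g) :
    Measure.map T (volume.withDensity (fun x => g (T x)))
      = (Measure.map T volume).withDensity g := by
  ext u hu
  rw [Measure.map_apply hT hu, withDensity_apply _ (hT hu), withDensity_apply _ hu,
    MeasureTheory.setLIntegral_map hu hg hT]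

lemma aux_dot_self {d : ℕ} {Q : Matrix (Fin d) (Fin d) ℝ} (h1 : Qᵀ * Q = 1)
    (x : Fin d → ℝ) : (Q *ᵥ x) ⬝ᵥ (Q *ᵥ x) = x ⬝ᵥ x := by
  rw [Matrix.dotProduct_mulVec, ← Matrix.vecMul_transpose, Matrix.vecMul_vecMul, h1,
    Matrix.vecMul_one]

lemma aux_measurable_mulVec {d : ℕ} (Q : Matrix (Fin d) (Fin d) ℝ) :
    Measurable (fun v : Fin d → ℝ => Q *ᵥ v) := by
  have : (fun v : Fin d → ℝ => Q *ᵥ v) = ⇑(Matrix.mulVecLin Q) := by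
    ext v i; simp [Matrix.mulVecLin]
  rw [this]
  exact (Matrix.mulVecLin Q).continuous_of_finiteDimensional.measurable

set_option maxHeartbeats 1000000 in
lemma aux_rot {d : ℕ} {Q : Matrix (Fin d) (Fin d) ℝ} (h1 : Qᵀ * Q = 1) :
    Measure.map (fun v : Fin d → ℝ => Q *ᵥ v)
        (Measure.pi fun _ : Fin d => gaussianReal 0 1)
      = Measure.pi fun _ : Fin d => gaussianReal 0 1 := by
  have hdet2 : Q.det * Q.det = 1 := by
    have := congrArg Matrix.det h1
    rwa [Matrix.det_mul, Matrix.det_transpose, Matrix.det_one] at this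
  have hdet : Q.det ≠ 0 := fun h => by simp [h] at hdet2
  have habs : |Q.det⁻¹| = 1 := by
    rcases mul_self_eq_one_iff.1 hdet2 with h | h <;> rw [h] <;> norm_num
  set g : (Fin d → ℝ) → ℝ≥0∞ := fun x => ∏ i, gaussianPDF 0 1 (x i) with hgdef
  have hg : Measurable g :=
    Finset.measurable_prod _ fun i _ =>
      (measurable_gaussianPDF 0 1).comp (measurable_pi_apply i)
  have hQm : Measurable (fun v : Fin d → ℝ => Q *ᵥ v) := aux_measurable_mulVec Q
  have hginv : ∀ x, g (Q *ᵥ x) = g x := by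
    intro x
    have hsum : ∀ y : Fin d → ℝ, ∏ i, gaussianPDF 0 1 (y i)
        = ENNReal.ofReal ((Real.sqrt (2 * π))⁻¹ ^ d * rexp (-(y ⬝ᵥ y) / 2)) := by
      intro y
      rw [show ∀ z : Fin d → ℝ, ∏ i, gaussianPDF 0 1 (z i)
          = ENNReal.ofReal (∏ i, gaussianPDFReal 0 1 (z i)) from fun z =>
          (ENNReal.ofReal_prod_of_nonneg fun i _ => gaussianPDFReal_nonneg 0 1 (z i)).symm]
      congr 1
      simp only [gaussianPDFReal, NNReal.coe_one, mul_one, sub_zero]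
      rw [Finset.prod_mul_distrib, Finset.prod_const, Finset.card_univ, Fintype.card_fin,
        ← Real.exp_sum]
      congr 1
      rw [Real.exp_eq_exp, dotProduct, neg_div, Finset.sum_div, ← Finset.sum_neg_distrib]
      exact Finset.sum_congr rfl fun i _ => by ring
    simp only [hgdef]
    rw [hsum, hsum, aux_dot_self h1]
  have hmapvol : Measure.map (fun v : Fin d → ℝ => Q *ᵥ v) volume = volume := by
    have hfun : (fun v : Fin d → ℝ => Q *ᵥ v) = ⇑(Matrix.toLin' Q) :=
      funext fun v => (Matrix.toLin'_apply Q v).symm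
    rw [hfun, Real.map_matrix_volume_pi_eq_smul_volume_pi hdet, habs, ENNReal.ofReal_one,
      one_smul]
  calc Measure.map (fun v : Fin d → ℝ => Q *ᵥ v) (Measure.pi fun _ : Fin d => gaussianReal 0 1)
      = Measure.map (fun v : Fin d → ℝ => Q *ᵥ v)
          (volume.withDensity fun x => g ((fun v : Fin d → ℝ => Q *ᵥ v) x)) := by
        rw [aux_pi_withDensity d]
        congr 1
        refine withDensity_congr_ae (ae_of_all _ fun x => ?_)
        exact (hginv x).symm
    _ = (Measure.map (fun v : Fin d → ℝ => Q *ᵥ v) volume).withDensity g :=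
        aux_map_withDensity hQm g hg
    _ = volume.withDensity g := by rw [hmapvol]
    _ = Measure.pi fun _ : Fin d => gaussianReal 0 1 := (aux_pi_withDensity d).symm

/-! ### spectral decomposition facts -/

lemma aux_spectral {d : ℕ} (B : Matrix (Fin d) (Fin d) ℝ) :
    ∃ Q : Matrix (Fin d) (Fin d) ℝ, Qᵀ * Q = 1 ∧
      (∀ v : Fin d → ℝ, v ⬝ᵥ ((Bᴴ * B) *ᵥ v)
        = ∑ i, (Matrix.isHermitian_conjTranspose_mul_self B).eigenvalues i * ((Q *ᵥ v) i) ^ 2) := by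
  set hM := Matrix.isHermitian_conjTranspose_mul_self B with hMdef
  set U : Matrix (Fin d) (Fin d) ℝ := (hM.eigenvectorUnitary : Matrix (Fin d) (Fin d) ℝ)
    with hUdef
  have hU1 : U * star U = 1 := Matrix.mem_unitaryGroup_iff.mp hM.eigenvectorUnitary.2
  have hstar : star U = Uᵀ := by
    rw [Matrix.star_eq_conjTranspose, Matrix.conjTranspose_eq_transpose_of_trivial]
  have hMeq : Bᴴ * B = U * Matrix.diagonal hM.eigenvalues * star U := by
    have h := hM.spectral_theorem
    have hdiag : Matrix.diagonal (RCLike.ofReal ∘ hM.eigenvalues)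
        = Matrix.diagonal hM.eigenvalues := by
      congr 1
    rw [hdiag] at h
    exact h
  refine ⟨star U, ?_, ?_⟩
  · rw [hstar, Matrix.transpose_transpose, ← hstar]
    exact hU1
  · intro v
    conv_lhs => rw [hMeq]
    rw [← Matrix.mulVec_mulVec, ← Matrix.mulVec_mulVec,
      Matrix.dotProduct_mulVec v U, ← Matrix.mulVec_transpose, ← hstar]
    have : ∀ w : Fin d → ℝ, w ⬝ᵥ (Matrix.diagonal hM.eigenvalues *ᵥ w)
        = ∑ i, hM.eigenvalues i * (w i) ^ 2 := by
      intro w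
      rw [dotProduct]
      refine Finset.sum_congr rfl fun i _ => ?_
      rw [Matrix.mulVec_diagonal]
      ring
    exact this _

lemma aux_trace {d : ℕ} (B : Matrix (Fin d) (Fin d) ℝ) :
    ∑ i, (Matrix.isHermitian_conjTranspose_mul_self B).eigenvalues i
      = ∑ i, ∑ j, (B i j) ^ 2 := by
  set hM := Matrix.isHermitian_conjTranspose_mul_self B with hMdef
  set U : Matrix (Fin d) (Fin d) ℝ := (hM.eigenvectorUnitary : Matrix (Fin d) (Fin d) ℝ)
    with hUdef
  have hU2 : star U * U = 1 := Matrix.mem_unitaryGroup_iff'.mp hM.eigenvectorUnitary.2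
  have hMeq : Bᴴ * B = U * Matrix.diagonal hM.eigenvalues * star U := by
    have h := hM.spectral_theorem
    have hdiag : Matrix.diagonal (RCLike.ofReal ∘ hM.eigenvalues)
        = Matrix.diagonal hM.eigenvalues := by congr 1
    rw [hdiag] at h
    exact h
  have h1 : (Bᴴ * B).trace = ∑ i, hM.eigenvalues i := by
    conv_lhs => rw [hMeq]
    rw [Matrix.trace_mul_cycle, hU2, Matrix.one_mul, Matrix.trace_diagonal]
  have h2 : (Bᴴ * B).trace = ∑ i, ∑ j, (B i j) ^ 2 := by
    simp only [Matrix.trace, Matrix.diag, Matrix.mul_apply, Matrix.conjTranspose_apply,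
      star_trivial]
    rw [Finset.sum_comm]
    exact Finset.sum_congr rfl fun i _ => Finset.sum_congr rfl fun j _ => by ring
  rw [← h1, h2]

end AuxStmt10

set_option maxHeartbeats 1000000 in
/-- For `U, V` independent `N(0, I_d)` vectors and `B ∈ ℝ^{d×d}` whose largest
singular value `D₁₁` satisfies `D₁₁²/t² ≤ 3/4` (equivalently every squared singular
value, i.e. every eigenvalue of `BᴴB`, is `≤ (3/4) t²`), one has
`exp(‖B‖_F²/(2t²)) ≤ E[exp(Uᵀ B V / t)] ≤ exp(‖B‖_F²/t²)`. -/
theorem stmt10 (d : ℕ) (B : Matrix (Fin d) (Fin d) ℝ) (t : ℝ) (ht : 0 < t)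
    (hsv : ∀ i, (Matrix.isHermitian_conjTranspose_mul_self B).eigenvalues i / t ^ 2 ≤ 3 / 4) :
    Real.exp ((∑ i, ∑ j, (B i j) ^ 2) / (2 * t ^ 2)) ≤
      (∫ p : (Fin d → ℝ) × (Fin d → ℝ), Real.exp (p.1 ⬝ᵥ (B *ᵥ p.2) / t)
        ∂((Measure.pi fun _ : Fin d => gaussianReal 0 1).prod
          (Measure.pi fun _ : Fin d => gaussianReal 0 1))) ∧
    (∫ p : (Fin d → ℝ) × (Fin d → ℝ), Real.exp (p.1 ⬝ᵥ (B *ᵥ p.2) / t)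
        ∂((Measure.pi fun _ : Fin d => gaussianReal 0 1).prod
          (Measure.pi fun _ : Fin d => gaussianReal 0 1))) ≤
      Real.exp ((∑ i, ∑ j, (B i j) ^ 2) / t ^ 2) := by
  have ht2 : (0:ℝ) < t ^ 2 := by positivity
  obtain ⟨Q, hQ1, hquad⟩ := aux_spectral B
  set lam : Fin d → ℝ := (Matrix.isHermitian_conjTranspose_mul_self B).eigenvalues with hlam
  have hlam0 : ∀ i, 0 ≤ lam i := fun i =>
    Matrix.eigenvalues_conjTranspose_mul_self_nonneg B i
  set s : Fin d → ℝ := fun i => lam i / t ^ 2 with hsdef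
  have hs0 : ∀ i, 0 ≤ s i := fun i => div_nonneg (hlam0 i) ht2.le
  have hs34 : ∀ i, s i ≤ 3 / 4 := hsv
  have hs1 : ∀ i, s i < 1 := fun i => lt_of_le_of_lt (hs34 i) (by norm_num)
  set Γ : Measure (Fin d → ℝ) := Measure.pi fun _ : Fin d => gaussianReal 0 1 with hΓ
  -- measurability
  have hdm : Measurable fun p : (Fin d → ℝ) × (Fin d → ℝ) => p.1 ⬝ᵥ (B *ᵥ p.2) / t := by
    apply Measurable.div_const
    simp only [dotProduct, Matrix.mulVec]
    apply Finset.measurable_sum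
    intro i _
    exact ((measurable_pi_apply i).comp measurable_fst).mul
      (Finset.measurable_sum _ fun j _ =>
        ((measurable_pi_apply j).comp measurable_snd).const_mul _)
  have hFm : Measurable fun p : (Fin d → ℝ) × (Fin d → ℝ) =>
      Real.exp (p.1 ⬝ᵥ (B *ᵥ p.2) / t) := Real.measurable_exp.comp hdm
  -- inner integral over u
  have hinner : ∀ v : Fin d → ℝ,
      ∫⁻ u, ENNReal.ofReal (Real.exp (u ⬝ᵥ (B *ᵥ v) / t)) ∂Γ
        = ENNReal.ofReal (Real.exp ((∑ i, lam i * ((Q *ᵥ v) i) ^ 2) / (2 * t ^ 2))) := by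
    intro v
    have h1 : ∀ u : Fin d → ℝ,
        Real.exp (u ⬝ᵥ (B *ᵥ v) / t) = ∏ i, Real.exp ((B *ᵥ v) i / t * u i) := by
      intro u
      rw [show u ⬝ᵥ (B *ᵥ v) / t = ∑ i, (B *ᵥ v) i / t * u i by
        rw [dotProduct, Finset.sum_div]
        exact Finset.sum_congr rfl fun i _ => by ring, Real.exp_sum]
    have hInt : Integrable (fun u : Fin d → ℝ => ∏ i, Real.exp ((B *ᵥ v) i / t * u i)) Γ :=
      aux_prod_integrable _ fun i => aux_integrable_lin _
    have hdot : (B *ᵥ v) ⬝ᵥ (B *ᵥ v) = v ⬝ᵥ ((Bᴴ * B) *ᵥ v) := by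
      rw [Matrix.conjTranspose_eq_transpose_of_trivial, ← Matrix.mulVec_mulVec,
        Matrix.dotProduct_mulVec v, Matrix.vecMul_transpose]
    calc ∫⁻ u, ENNReal.ofReal (Real.exp (u ⬝ᵥ (B *ᵥ v) / t)) ∂Γ
        = ∫⁻ u, ENNReal.ofReal (∏ i, Real.exp ((B *ᵥ v) i / t * u i)) ∂Γ :=
          lintegral_congr fun u => by rw [h1 u]
      _ = ENNReal.ofReal (∫ u, ∏ i, Real.exp ((B *ᵥ v) i / t * u i) ∂Γ) :=
          (ofReal_integral_eq_lintegral_ofReal hInt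
            (ae_of_all _ fun u => Finset.prod_nonneg fun i _ => Real.exp_nonneg _)).symm
      _ = ENNReal.ofReal (∏ i, ∫ x, Real.exp ((B *ᵥ v) i / t * x) ∂(gaussianReal 0 1)) :=
          congrArg ENNReal.ofReal
            (aux_prod_integral (fun i y => Real.exp ((B *ᵥ v) i / t * y)))
      _ = ENNReal.ofReal (∏ i, Real.exp (((B *ᵥ v) i / t) ^ 2 / 2)) := by
          congr 1
          exact Finset.prod_congr rfl fun i _ => aux_int_lin _
      _ = ENNReal.ofReal (Real.exp ((∑ i, lam i * ((Q *ᵥ v) i) ^ 2) / (2 * t ^ 2))) := by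
          rw [← Real.exp_sum]
          congr 1
          rw [Real.exp_eq_exp]
          calc ∑ i, ((B *ᵥ v) i / t) ^ 2 / 2
              = (∑ i, (B *ᵥ v) i * (B *ᵥ v) i) / (2 * t ^ 2) := by
                rw [Finset.sum_div]
                exact Finset.sum_congr rfl fun i _ => by field_simp
            _ = ((B *ᵥ v) ⬝ᵥ (B *ᵥ v)) / (2 * t ^ 2) := by rw [dotProduct]
            _ = (v ⬝ᵥ ((Bᴴ * B) *ᵥ v)) / (2 * t ^ 2) := by rw [hdot]
            _ = (∑ i, lam i * ((Q *ᵥ v) i) ^ 2) / (2 * t ^ 2) := by rw [hquad v]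
  -- the key exact value
  have key : (∫ p : (Fin d → ℝ) × (Fin d → ℝ), Real.exp (p.1 ⬝ᵥ (B *ᵥ p.2) / t)
      ∂(Γ.prod Γ)) = ∏ i, (Real.sqrt (1 - s i))⁻¹ := by
    rw [integral_eq_lintegral_of_nonneg_ae (ae_of_all _ fun p => Real.exp_nonneg _)
      hFm.aestronglyMeasurable]
    have hG : Measurable fun w : Fin d → ℝ =>
        Real.exp ((∑ i, lam i * (w i) ^ 2) / (2 * t ^ 2)) := by
      apply Real.measurable_exp.comp
      apply Measurable.div_const
      exact Finset.measurable_sum _ fun i _ =>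
        (((measurable_pi_apply i).pow_const 2).const_mul _)
    have hIntG : Integrable (fun w : Fin d → ℝ =>
        ∏ i, Real.exp (s i * (w i) ^ 2 / 2)) Γ :=
      aux_prod_integrable _ fun i => aux_integrable_sq (hs1 i)
    have hGsplit : ∀ w : Fin d → ℝ,
        Real.exp ((∑ i, lam i * (w i) ^ 2) / (2 * t ^ 2))
          = ∏ i, Real.exp (s i * (w i) ^ 2 / 2) := by
      intro w
      rw [Finset.sum_div, Real.exp_sum]
      refine Finset.prod_congr rfl fun i _ => ?_
      rw [Real.exp_eq_exp]
      show lam i * w i ^ 2 / (2 * t ^ 2) = lam i / t ^ 2 * w i ^ 2 / 2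
      rw [div_mul_eq_mul_div, div_div, mul_comm (t ^ 2) 2]
    have hlin : (∫⁻ p, ENNReal.ofReal (Real.exp (p.1 ⬝ᵥ (B *ᵥ p.2) / t)) ∂(Γ.prod Γ))
        = ENNReal.ofReal (∏ i, (Real.sqrt (1 - s i))⁻¹) := by
      rw [lintegral_prod_symm' _ hFm.ennreal_ofReal]
      calc ∫⁻ v, ∫⁻ u, ENNReal.ofReal (Real.exp ((u, v).1 ⬝ᵥ (B *ᵥ (u, v).2) / t)) ∂Γ ∂Γ
          = ∫⁻ v, ENNReal.ofReal
              (Real.exp ((∑ i, lam i * ((Q *ᵥ v) i) ^ 2) / (2 * t ^ 2))) ∂Γ :=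
            lintegral_congr fun v => hinner v
        _ = ∫⁻ w, ENNReal.ofReal
              (Real.exp ((∑ i, lam i * (w i) ^ 2) / (2 * t ^ 2))) ∂Γ := by
            conv_rhs => rw [hΓ, ← aux_rot hQ1]
            rw [lintegral_map hG.ennreal_ofReal (aux_measurable_mulVec Q)]
        _ = ∫⁻ w, ENNReal.ofReal (∏ i, Real.exp (s i * (w i) ^ 2 / 2)) ∂Γ :=
            lintegral_congr fun w => by rw [hGsplit w]
        _ = ENNReal.ofReal (∫ w, ∏ i, Real.exp (s i * (w i) ^ 2 / 2) ∂Γ) :=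
            (ofReal_integral_eq_lintegral_ofReal hIntG
              (ae_of_all _ fun w => Finset.prod_nonneg fun i _ => Real.exp_nonneg _)).symm
        _ = ENNReal.ofReal (∏ i, ∫ x, Real.exp (s i * x ^ 2 / 2) ∂(gaussianReal 0 1)) :=
            congrArg ENNReal.ofReal
              (aux_prod_integral (fun i y => Real.exp (s i * y ^ 2 / 2)))
        _ = ENNReal.ofReal (∏ i, (Real.sqrt (1 - s i))⁻¹) := by
            congr 1
            exact Finset.prod_congr rfl fun i _ => aux_int_sq (hs1 i)
    rw [hlin, ENNReal.toReal_ofReal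
      (Finset.prod_nonneg fun i _ => inv_nonneg.2 (Real.sqrt_nonneg _))]
  -- final bounds
  have htr : ∑ i, s i = (∑ i, ∑ j, (B i j) ^ 2) / t ^ 2 := by
    have : ∑ i, s i = (∑ i, lam i) / t ^ 2 := by
      rw [Finset.sum_div]
    rw [this, hlam, aux_trace B]
  rw [key]
  constructor
  · calc Real.exp ((∑ i, ∑ j, (B i j) ^ 2) / (2 * t ^ 2))
        = ∏ i, Real.exp (s i / 2) := by
          rw [← Real.exp_sum, Real.exp_eq_exp, ← Finset.sum_div, htr, div_div, mul_comm (t^2) 2]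
      _ ≤ ∏ i, (Real.sqrt (1 - s i))⁻¹ :=
          Finset.prod_le_prod (fun i _ => Real.exp_nonneg _) (fun i _ => (aux_sqrt_bound (hs0 i) (hs34 i)).1)
  · calc ∏ i, (Real.sqrt (1 - s i))⁻¹
        ≤ ∏ i, Real.exp (s i) :=
          Finset.prod_le_prod (fun i _ => inv_nonneg.2 (Real.sqrt_nonneg _))
            (fun i _ => (aux_sqrt_bound (hs0 i) (hs34 i)).2)
      _ = Real.exp ((∑ i, ∑ j, (B i j) ^ 2) / t ^ 2) := by
          rw [← Real.exp_sum, htr]
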